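/- The function x ↦ 2·√x·artanh(√x) is convex on the interval [0,1). -/

import Mathlib

/-- Inverse hyperbolic tangent. -/
noncomputable def artanh (x : ℝ) : ℝ := (1 / 2) * Real.log ((1 + x) / (1 - x))

/-- A pointwise limit of convex functions is convex. -/
lemma convexOn_of_tendsto {s : Set ℝ} (hs : Convex ℝ s) {g : ℕ → ℝ → ℝ} {f : ℝ → ℝ}
    (hg : ∀ n, ConvexOn ℝ s (g n))
    (hlim : ∀ x ∈ s, Filter.Tendsto (fun n => g n x) Filter.atTop (nhds (f x))) :
    ConvexOn ℝ s f := by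
  refine ⟨hs, fun x hx y hy a b ha hb hab => ?_⟩
  have hm : a • x + b • y ∈ s := hs hx hy ha hb hab
  refine le_of_tendsto_of_tendsto' (hlim _ hm)
    (((hlim x hx).const_mul a).add ((hlim y hy).const_mul b)) fun n => ?_
  exact (hg n).2 hx hy ha hb hab

/-- Power series expansion of `2 √x artanh √x` on `[0,1)`. -/
lemma hasSum_artanh_series {x : ℝ} (hx : x ∈ Set.Ico (0 : ℝ) 1) :
    HasSum (fun k : ℕ => (2 : ℝ) * (1 / (2 * k + 1)) * x ^ (k + 1))
      (2 * Real.sqrt x * artanh (Real.sqrt x)) := by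
  obtain ⟨h0, h1⟩ := hx
  set t := Real.sqrt x with ht
  have ht0 : 0 ≤ t := Real.sqrt_nonneg x
  have ht1 : t < 1 := by
    rw [show (1:ℝ) = Real.sqrt 1 by simp]
    exact Real.sqrt_lt_sqrt h0 h1
  have habs : |t| < 1 := by rwa [abs_of_nonneg ht0]
  have hsum := (Real.hasSum_log_sub_log_of_abs_lt_one habs).mul_left t
  have hsq : t ^ 2 = x := Real.sq_sqrt h0
  have heq : (fun k : ℕ => t * ((2 : ℝ) * (1 / (2 * k + 1)) * t ^ (2 * k + 1)))
      = fun k : ℕ => (2 : ℝ) * (1 / (2 * k + 1)) * x ^ (k + 1) := by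
    funext k
    have : t * t ^ (2 * k + 1) = x ^ (k + 1) := by
      rw [← pow_succ']
      have : 2 * k + 1 + 1 = 2 * (k + 1) := by ring
      rw [this, pow_mul, hsq]
    rw [mul_comm t, mul_assoc, mul_comm (t ^ (2 * k + 1)) t, this]
  have hval : t * (Real.log (1 + t) - Real.log (1 - t)) = 2 * t * artanh t := by
    have h1t : (0 : ℝ) < 1 + t := by linarith
    have h2t : (0 : ℝ) < 1 - t := by linarith
    rw [artanh, Real.log_div (ne_of_gt h1t) (ne_of_gt h2t)]
    ring
  rw [heq, hval] at hsum
  exact hsum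

/-- The function `x ↦ 2 √x artanh √x` is convex on `[0,1)`. -/
theorem convexOn_sqrt_artanh_sqrt :
    ConvexOn ℝ (Set.Ico (0 : ℝ) 1)
      (fun x : ℝ => 2 * Real.sqrt x * artanh (Real.sqrt x)) := by
  refine convexOn_of_tendsto (convex_Ico 0 1)
    (g := fun N x => ∑ k ∈ Finset.range N, (2 : ℝ) * (1 / (2 * k + 1)) * x ^ (k + 1))
    (fun N => ?_) (fun x hx => (hasSum_artanh_series hx).tendsto_sum_nat)
  induction N with
  | zero => simpa using convexOn_const (0 : ℝ) (convex_Ico 0 1)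
  | succ n ih =>
      have hpow : ConvexOn ℝ (Set.Ico (0 : ℝ) 1) fun x : ℝ => x ^ (n + 1) :=
        (convexOn_pow (n + 1)).subset (fun x hx => hx.1) (convex_Ico 0 1)
      have hc : (0 : ℝ) ≤ 2 * (1 / (2 * n + 1)) := by positivity
      have := ih.add (hpow.smul hc)
      simpa [Finset.sum_range_succ, smul_eq_mul, mul_comm, Pi.add_def] using this
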